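/- Let ψ: ℝ³ → ℝ be convex differentiable, λ_* ∈ ℝ³ with ψ(λ_*) = 0, y_* > 0, and set (x⁻_*, x⁺_*, 1) = y_*·Dψ(λ_*). Suppose t⁻x⁻_* = t⁺x⁺_* = z_* < 0 and λ_* = (ℓ(u_*), h(u_*)) with ℓ(u) = ((1−u)t⁻/2, (1+u)t⁺/2). Then sup_{λ∈ℝ³} (⟨λ, (x⁻_*, x⁺_*, 1)⟩ − y_*·ψ(λ) − min{t⁻x⁻_*, t⁺x⁺_*, 0}) = h(u_*). -/

import Mathlib

open Set

lemma support_ineq {E : Type*} [NormedAddCommGroup E] [NormedSpace ℝ E]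
    {ψ : E → ℝ} (hconv : ConvexOn ℝ univ ψ) (hdiff : Differentiable ℝ ψ)
    (a b : E) : ψ a + fderiv ℝ ψ a (b - a) ≤ ψ b := by
  set g : ℝ → ℝ := fun t => ψ (a + t • (b - a)) with hg
  have hgconv : ConvexOn ℝ univ g := by
    have := hconv.comp_affineMap
      (AffineMap.const ℝ ℝ a + (LinearMap.toSpanSingleton ℝ E (b - a)).toAffineMap)
    simpa [g, Function.comp_def] using this
  have hderiv : HasDerivAt g (fderiv ℝ ψ a (b - a)) 0 := by
    have h1 : HasDerivAt (fun t : ℝ => a + t • (b - a)) (b - a) 0 := by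
      simpa using ((hasDerivAt_id (0:ℝ)).smul_const (b - a)).const_add a
    have := (hdiff (a + (0:ℝ) • (b - a))).hasFDerivAt.comp_hasDerivAt 0 h1
    simpa [g, Function.comp_def] using this
  have := hgconv.le_slope_of_hasDerivAt (mem_univ (0:ℝ)) (mem_univ (1:ℝ))
    one_pos hderiv
  have hslope : slope g 0 1 = ψ b - ψ a := by
    simp [slope, g]
  rw [hslope] at this
  linarith

/-- Upper-bound computation in the evaluation of the uncertainty exponent: for convex
differentiable `ψ` with `ψ(λ_*) = 0`, `y_*·Dψ(λ_*) = (x⁻_*, x⁺_*, 1)` and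
`t⁻x⁻_* = t⁺x⁺_* = z_* < 0`, the supremum over `λ ∈ ℝ³` of
`⟨λ,(x⁻_*,x⁺_*,1)⟩ − y_*ψ(λ) − min{t⁻x⁻_*, t⁺x⁺_*, 0}` equals `h(u_*)`, the third
coordinate of `λ_* = (ℓ(u_*), h(u_*))`. -/
theorem stmt12 (ψ : ℝ × ℝ × ℝ → ℝ) (hconv : ConvexOn ℝ univ ψ)
    (hdiff : Differentiable ℝ ψ)
    (tm tp : ℝ) (htm : 0 < tm) (htp : 0 < tp)
    (ustar hstar ystar xm xp zstar : ℝ) (hy : 0 < ystar)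
    (lamstar : ℝ × ℝ × ℝ)
    (hlam : lamstar = ((1 - ustar) * tm / 2, (1 + ustar) * tp / 2, hstar))
    (hψ0 : ψ lamstar = 0)
    (hgrad : ∀ v : ℝ × ℝ × ℝ,
      ystar * fderiv ℝ ψ lamstar v = xm * v.1 + xp * v.2.1 + v.2.2)
    (hzm : tm * xm = zstar) (hzp : tp * xp = zstar) (hz : zstar < 0) :
    IsGreatest (Set.range fun lam : ℝ × ℝ × ℝ =>
      lam.1 * xm + lam.2.1 * xp + lam.2.2 - ystar * ψ lam -
        min (min (tm * xm) (tp * xp)) 0) hstar := by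
  have hmin : min (min (tm * xm) (tp * xp)) 0 = zstar := by
    rw [hzm, hzp]; simp [le_of_lt hz]
  have hls1 : lamstar.1 * xm = (1 - ustar) / 2 * zstar := by
    rw [hlam]; dsimp; rw [← hzm]; ring
  have hls2 : lamstar.2.1 * xp = (1 + ustar) / 2 * zstar := by
    rw [hlam]; dsimp; rw [← hzp]; ring
  have hls3 : lamstar.2.2 = hstar := by rw [hlam]
  constructor
  · exact ⟨lamstar, by dsimp only; rw [hψ0, hmin, hls1, hls2, hls3]; ring⟩
  · rintro _ ⟨lam, rfl⟩
    dsimp only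
    have hsup := support_ineq hconv hdiff lamstar lam
    have hg := hgrad (lam - lamstar)
    have h1 : (lam - lamstar).1 = lam.1 - lamstar.1 := rfl
    have h2 : (lam - lamstar).2.1 = lam.2.1 - lamstar.2.1 := rfl
    have h3 : (lam - lamstar).2.2 = lam.2.2 - lamstar.2.2 := rfl
    rw [h1, h2, h3] at hg
    rw [hψ0] at hsup
    have hmul : ystar * (fderiv ℝ ψ lamstar (lam - lamstar)) ≤ ystar * ψ lam := by
      nlinarith
    rw [hg] at hmul
    rw [hmin]
    nlinarith [hls1, hls2, hls3, hmul]
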